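/- The rank function v on ω-sequences of ordinals is weakly monotone and strictly monotone on z-special elements; consequently (by its minimality) v is the smallest operation (ℕ → Ordinal) → Ordinal that is weakly monotone and strictly monotone on z-special elements. -/
import Mathlib


/-- `ζ_a`: the least ordinal `ζ` such that `{i | ζ < a i}` is finite. -/
noncomputable def zetaSeq (a : ℕ → Ordinal.{0}) : Ordinal.{0} :=
  sInf {ζ : Ordinal | {i : ℕ | ζ < a i}.Finite}

/-- `S` is weakly monotone. -/
def WeaklyMonotone (S : (ℕ → Ordinal.{0}) → Ordinal.{0}) : Prop :=
  ∀ a b : ℕ → Ordinal, (∀ i, a i ≤ b i) → S a ≤ S b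

/-- `S` is strictly monotone on z-special elements. -/
def StrictMonoOnZSpecial (S : (ℕ → Ordinal.{0}) → Ordinal.{0}) : Prop :=
  ∀ a b : ℕ → Ordinal, (∀ i, a i ≤ b i) →
    (∃ j : ℕ, zetaSeq a < b j ∧ a j < b j) → S a < S b

/-- `b ≺ a` iff there are an index `i₀`, a finite set `F ⊆ ℕ` and an ordinal `β` with
`b i₀ ≤ β < a i₀`, `b i ≤ a i` for all `i`, and `b i ≤ β` for all `i ∉ F`. -/
def seqPrec (b a : ℕ → Ordinal.{0}) : Prop :=
  ∃ (i₀ : ℕ) (F : Finset ℕ) (β : Ordinal),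
    b i₀ ≤ β ∧ β < a i₀ ∧ (∀ i, b i ≤ a i) ∧ ∀ i ∉ F, b i ≤ β

/-- `v a`: the rank of the sequence `a` in the well-founded relation `≺`. -/
noncomputable def vRank (hwf : WellFounded seqPrec) (a : ℕ → Ordinal.{0}) : Ordinal.{1} :=
  @IsWellFounded.rank _ seqPrec ⟨hwf⟩ a

-- Auxiliary lemmas

/-- `zetaSeq a` itself bounds `a i` off a finite set. -/
lemma zetaSeq_mem (a : ℕ → Ordinal.{0}) : {i : ℕ | zetaSeq a < a i}.Finite := by
  have hne : {ζ : Ordinal | {i : ℕ | ζ < a i}.Finite}.Nonempty := by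
    refine ⟨⨆ i, a i, ?_⟩
    have : {i : ℕ | (⨆ i, a i) < a i} = ∅ := by
      ext i
      simp only [Set.mem_setOf_eq, Set.mem_empty_iff_false, iff_false, not_lt]
      exact Ordinal.le_iSup a i
    simp [this]
  exact csInf_mem hne

lemma seqPrec_zspecial {b a : ℕ → Ordinal.{0}} (h : seqPrec b a) :
    (∀ i, b i ≤ a i) ∧ ∃ j, zetaSeq b < a j ∧ b j < a j := by
  obtain ⟨i₀, F, β, hb₀, hβ, hle, hoff⟩ := h
  refine ⟨hle, i₀, ?_, lt_of_le_of_lt hb₀ hβ⟩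
  have hz : zetaSeq b ≤ β := by
    apply csInf_le'
    apply Set.Finite.subset F.finite_toSet
    intro i hi
    by_contra hiF
    exact absurd (hoff i hiF) (not_le.2 hi)
  exact lt_of_le_of_lt hz hβ

lemma zspecial_seqPrec {a b : ℕ → Ordinal.{0}} (hle : ∀ i, a i ≤ b i)
    (h : ∃ j, zetaSeq a < b j ∧ a j < b j) : seqPrec a b := by
  obtain ⟨j, hz, hj⟩ := h
  refine ⟨j, (zetaSeq_mem a).toFinset, max (a j) (zetaSeq a), le_max_left _ _,
    max_lt hj hz, hle, fun i hi => ?_⟩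
  refine le_trans ?_ (le_max_right _ _)
  simpa using fun h' => hi ((zetaSeq_mem a).mem_toFinset.2 h')

theorem vRank_weaklyMonotone_strictMonoOnZSpecial_smallest
    (hwf : WellFounded seqPrec) :
    (∀ a b : ℕ → Ordinal.{0}, (∀ i, a i ≤ b i) → vRank hwf a ≤ vRank hwf b) ∧
      (∀ a b : ℕ → Ordinal.{0}, (∀ i, a i ≤ b i) →
        (∃ j : ℕ, zetaSeq a < b j ∧ a j < b j) → vRank hwf a < vRank hwf b) ∧
      ∀ T : (ℕ → Ordinal.{0}) → Ordinal.{0},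
        WeaklyMonotone T → StrictMonoOnZSpecial T →
          ∀ a : ℕ → Ordinal.{0}, vRank hwf a ≤ Ordinal.lift.{1} (T a) := by
  have inst : IsWellFounded _ seqPrec := ⟨hwf⟩
  refine ⟨?_, ?_, ?_⟩
  · intro a b hab
    rw [vRank, IsWellFounded.rank_eq]
    apply Ordinal.iSup_le
    rintro ⟨c, hc⟩
    rw [Order.succ_le_iff]
    have : seqPrec c b := by
      obtain ⟨i₀, F, β, h1, h2, h3, h4⟩ := hc
      exact ⟨i₀, F, β, h1, lt_of_lt_of_le h2 (hab i₀), fun i => le_trans (h3 i) (hab i), h4⟩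
    exact IsWellFounded.rank_lt_of_rel this
  · intro a b hab hsp
    exact IsWellFounded.rank_lt_of_rel (zspecial_seqPrec hab hsp)
  · intro T hWM hSM a
    induction a using hwf.induction with
    | _ a IH =>
      rw [vRank, IsWellFounded.rank_eq]
      apply Ordinal.iSup_le
      rintro ⟨c, hc⟩
      rw [Order.succ_le_iff]
      have hTlt : T c < T a := by
        obtain ⟨hle, hsp⟩ := seqPrec_zspecial hc
        exact hSM c a hle hsp
      exact lt_of_le_of_lt (IH c hc) (by exact_mod_cast Ordinal.lift_lt.2 hTlt)
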